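/- arXiv:1901.01285 — 7 statements merged into one kernel-verified Lean document; each statement's English description precedes it below -/
import Mathlib

section
/- The pseudo controllability Gramian 𝒫 = ∫₀^∞ (e^{Aτ} − J) B Bᵀ (e^{Aᵀτ} − Jᵀ) dτ of a semistable system satisfies the Lyapunov-like equation A𝒫 + 𝒫Aᵀ + (I − J) B Bᵀ (I − Jᵀ) = 0. -/
open Matrix Filter NormedSpace MeasureTheory



namespace PseudoGramianAux

attribute [local instance] Matrix.frobeniusNormedAddCommGroup Matrix.frobeniusNormedRing
  Matrix.frobeniusNormedAlgebra Matrix.frobeniusNormedSpace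

variable {n : ℕ} {A J : Matrix (Fin n) (Fin n) ℝ}
  (hJ : Tendsto (fun t : ℝ => exp (t • A)) atTop (nhds J))

theorem exp_smul_add (s t : ℝ) : exp ((s + t) • A) = exp (s • A) * exp (t • A) := by
  rw [add_smul]
  exact Matrix.exp_add_of_commute (s • A) (t • A)
    (((Commute.refl A).smul_left s).smul_right t)

include hJ

theorem exp_mul_J (s : ℝ) : exp (s • A) * J = J := by
  have h1 : Tendsto (fun t : ℝ => exp (s • A) * exp (t • A)) atTop
      (nhds (exp (s • A) * J)) := hJ.const_mul _
  have h2 : Tendsto (fun t : ℝ => exp (s • A) * exp (t • A)) atTop (nhds J) := by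
    simp_rw [fun t => (exp_smul_add (A := A) s t).symm]
    exact hJ.comp (tendsto_atTop_add_const_left _ s tendsto_id)
  exact tendsto_nhds_unique h1 h2

theorem J_mul_exp (s : ℝ) : J * exp (s • A) = J := by
  have h1 : Tendsto (fun t : ℝ => exp (t • A) * exp (s • A)) atTop
      (nhds (J * exp (s • A))) := hJ.mul_const _
  have h2 : Tendsto (fun t : ℝ => exp (t • A) * exp (s • A)) atTop (nhds J) := by
    simp_rw [fun t => (exp_smul_add (A := A) t s).symm]
    exact hJ.comp (tendsto_atTop_add_const_right _ s tendsto_id)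
  exact tendsto_nhds_unique h1 h2

theorem J_mul_J : J * J = J := by
  have h1 : Tendsto (fun t : ℝ => exp (t • A) * J) atTop (nhds (J * J)) := hJ.mul_const _
  have h2 : Tendsto (fun t : ℝ => exp (t • A) * J) atTop (nhds J) := by
    simp_rw [exp_mul_J hJ]
    exact tendsto_const_nhds
  exact tendsto_nhds_unique h1 h2

theorem A_mul_J : A * J = 0 := by
  have h1 : HasDerivAt (fun s : ℝ => exp (s • A) * J) (A * exp ((0:ℝ) • A) * J) 0 :=
    (hasDerivAt_exp_smul_const' A (0:ℝ)).mul_const J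
  have h2 : HasDerivAt (fun s : ℝ => exp (s • A) * J) 0 0 := by
    have : (fun s : ℝ => exp (s • A) * J) = fun _ => J := funext fun s => exp_mul_J hJ s
    rw [this]; exact hasDerivAt_const _ _
  have := h1.unique h2
  simpa [zero_smul, exp_zero] using this

theorem J_mul_A : J * A = 0 := by
  have h1 : HasDerivAt (fun s : ℝ => J * exp (s • A)) (J * (exp ((0:ℝ) • A) * A)) 0 :=
    (hasDerivAt_exp_smul_const A (0:ℝ)).const_mul J
  have h2 : HasDerivAt (fun s : ℝ => J * exp (s • A)) 0 0 := by
    have : (fun s : ℝ => J * exp (s • A)) = fun _ => J := funext fun s => J_mul_exp hJ s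
    rw [this]; exact hasDerivAt_const _ _
  have := h1.unique h2
  simpa [zero_smul, exp_zero] using this

/-- The semigroup property of `Q t = exp (t•A) - J`. -/
theorem Q_add (s t : ℝ) :
    exp ((s + t) • A) - J = (exp (s • A) - J) * (exp (t • A) - J) := by
  rw [sub_mul, mul_sub, mul_sub, exp_mul_J hJ, J_mul_exp hJ, J_mul_J hJ,
    ← exp_smul_add]
  abel

end PseudoGramianAux

namespace PseudoGramianAux

attribute [local instance] Matrix.frobeniusNormedAddCommGroup Matrix.frobeniusNormedRing
  Matrix.frobeniusNormedAlgebra Matrix.frobeniusNormedSpace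

variable {n : ℕ} {A J : Matrix (Fin n) (Fin n) ℝ}
  (hJ : Tendsto (fun t : ℝ => exp (t • A)) atTop (nhds J))

omit hJ in
theorem Q_continuous : Continuous fun t : ℝ => exp (t • A) - J :=
  ((NormedSpace.exp_continuous.comp (continuous_id.smul continuous_const))).sub continuous_const

include hJ

theorem Q_tendsto_zero : Tendsto (fun t : ℝ => exp (t • A) - J) atTop (nhds 0) := by
  have := hJ.sub (tendsto_const_nhds (x := J))
  simpa using this

/-- Exponential decay of `exp (t•A) - J`. -/
theorem decay : ∃ C c : ℝ, 0 ≤ C ∧ 0 < c ∧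
    ∀ t : ℝ, 0 ≤ t → ‖exp (t • A) - J‖ ≤ C * Real.exp (-c * t) := by
  set Q : ℝ → Matrix (Fin n) (Fin n) ℝ := fun t => exp (t • A) - J with hQdef
  obtain ⟨T₀, hT₀⟩ := (eventually_atTop).mp
    ((NormedAddCommGroup.tendsto_nhds_zero.mp (Q_tendsto_zero hJ)) (1/2) (by norm_num))
  set T : ℝ := max T₀ 1 with hTdef
  have hT1 : (1:ℝ) ≤ T := le_max_right _ _
  have hTpos : 0 < T := lt_of_lt_of_le one_pos hT1
  have hQT : ‖Q T‖ ≤ 1/2 := (hT₀ T (le_max_left _ _)).le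
  -- sup on [0, T]
  obtain ⟨M, hM⟩ : ∃ M : ℝ, 0 ≤ M ∧ ∀ t ∈ Set.Icc (0:ℝ) T, ‖Q t‖ ≤ M := by
    obtain ⟨M, hM⟩ := (isCompact_Icc (a := (0:ℝ)) (b := T)).exists_bound_of_continuousOn
      (Q_continuous.norm.continuousOn)
    refine ⟨max M 0, le_max_right _ _, fun t ht => le_trans ?_ (le_max_left M 0)⟩
    simpa using hM t ht
  obtain ⟨hM0, hMb⟩ := hM
  -- step bound
  have key : ∀ k : ℕ, ∀ t : ℝ, (k : ℝ) * T ≤ t → t ≤ ((k : ℝ) + 1) * T →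
      ‖Q t‖ ≤ M * (1/2) ^ k := by
    intro k
    induction k with
    | zero => intro t h1 h2
              simpa using hMb t ⟨by simpa using h1, by simpa using h2⟩
    | succ k ih =>
      intro t h1 h2
      have hsplit : Q t = Q (t - T) * Q T := by
        have := Q_add hJ (t - T) T
        rw [sub_add_cancel] at this
        exact this
      have hb1 : ‖Q (t - T)‖ ≤ M * (1/2) ^ k := by
        refine ih (t - T) ?_ ?_
        · push_cast at h1 ⊢; linarith
        · push_cast at h2 ⊢; linarith
      calc ‖Q t‖ ≤ ‖Q (t - T)‖ * ‖Q T‖ := hsplit ▸ norm_mul_le _ _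
        _ ≤ (M * (1/2) ^ k) * (1/2) := by
            exact mul_le_mul hb1 hQT (norm_nonneg _) (by positivity)
        _ = M * (1/2) ^ (k+1) := by ring
  refine ⟨2 * M, Real.log 2 / T, by positivity, by positivity, fun t ht => ?_⟩
  set k : ℕ := ⌊t / T⌋₊ with hk
  have hdiv : 0 ≤ t / T := by positivity
  have h1 : (k : ℝ) * T ≤ t := by
    have := Nat.floor_le hdiv
    calc (k:ℝ) * T ≤ (t / T) * T := by nlinarith
      _ = t := by field_simp
  have h2 : t ≤ ((k : ℝ) + 1) * T := by
    have := (Nat.lt_floor_add_one (t / T)).le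
    calc t = (t / T) * T := by field_simp
      _ ≤ ((k:ℝ) + 1) * T := by nlinarith
  have hQb := key k t h1 h2
  have hexp : M * (1/2) ^ k ≤ 2 * M * Real.exp (-(Real.log 2 / T) * t) := by
    have hpow : ((1:ℝ)/2) ^ k = Real.exp (-(k : ℝ) * Real.log 2) := by
      have h12 : ((1:ℝ)/2) = Real.exp (-Real.log 2) := by
        rw [Real.exp_neg, Real.exp_log two_pos]; norm_num
      rw [h12, ← Real.exp_nat_mul]
      congr 1
      ring
    rw [hpow]
    have hklb : t / T - 1 ≤ (k : ℝ) := by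
      have := (Nat.lt_floor_add_one (t / T)).le
      linarith
    have hlog2 : 0 < Real.log 2 := Real.log_pos (by norm_num)
    have hmono : Real.exp (-(k : ℝ) * Real.log 2) ≤
        Real.exp ((1 - t / T) * Real.log 2) := by
      apply Real.exp_le_exp.mpr
      nlinarith
    calc M * Real.exp (-(k : ℝ) * Real.log 2)
        ≤ M * Real.exp ((1 - t / T) * Real.log 2) := by nlinarith [Real.exp_pos (-(k:ℝ) * Real.log 2)]
      _ = 2 * M * Real.exp (-(Real.log 2 / T) * t) := by
          rw [show ((1:ℝ) - t / T) * Real.log 2 = Real.log 2 + (-(Real.log 2 / T) * t) by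
            field_simp; ring]
          rw [Real.exp_add, Real.exp_log (by norm_num)]
          ring
  exact hQb.trans hexp

end PseudoGramianAux


namespace PseudoGramianAux2

attribute [local instance] Matrix.frobeniusNormedAddCommGroup Matrix.frobeniusNormedRing
  Matrix.frobeniusNormedAlgebra Matrix.frobeniusNormedSpace

variable {n : ℕ} {A J : Matrix (Fin n) (Fin n) ℝ}

theorem transpose_Q (t : ℝ) : (exp (t • A) - J)ᵀ = exp (t • Aᵀ) - Jᵀ := by
  rw [transpose_sub]
  congr 1
  rw [← transpose_smul, Matrix.exp_transpose]

theorem F_hasDerivAt (hAJ : A * J = 0) (M₀ : Matrix (Fin n) (Fin n) ℝ) (τ : ℝ) :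
    HasDerivAt (fun t : ℝ => (exp (t • A) - J) * M₀ * (exp (t • A) - J)ᵀ)
      (A * ((exp (τ • A) - J) * M₀ * (exp (τ • A) - J)ᵀ)
        + ((exp (τ • A) - J) * M₀ * (exp (τ • A) - J)ᵀ) * Aᵀ) τ := by
  have hQ' : HasDerivAt (fun t : ℝ => exp (t • A) - J) (A * (exp (τ • A) - J)) τ := by
    have h := (hasDerivAt_exp_smul_const' A τ).sub_const J
    have : A * exp (τ • A) = A * (exp (τ • A) - J) := by
      rw [mul_sub, hAJ, sub_zero]
    exact h.congr_deriv this
  have hG' : HasDerivAt (fun t : ℝ => exp (t • Aᵀ) - Jᵀ)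
      ((exp (τ • Aᵀ) - Jᵀ) * Aᵀ) τ := by
    have h := (hasDerivAt_exp_smul_const Aᵀ τ).sub_const Jᵀ
    have : exp (τ • Aᵀ) * Aᵀ = (exp (τ • Aᵀ) - Jᵀ) * Aᵀ := by
      rw [sub_mul]
      have : Jᵀ * Aᵀ = 0 := by rw [← transpose_mul, hAJ, transpose_zero]
      rw [this, sub_zero]
    exact h.congr_deriv this
  have hprod := (hQ'.mul_const M₀).mul hG'
  have hfun : (fun t : ℝ => (exp (t • A) - J) * M₀ * (exp (t • A) - J)ᵀ)
      = fun t : ℝ => (exp (t • A) - J) * M₀ * (exp (t • Aᵀ) - Jᵀ) := by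
    funext t; rw [transpose_Q]
  rw [hfun]
  refine hprod.congr_deriv ?_
  rw [transpose_Q]; noncomm_ring

end PseudoGramianAux2


namespace PseudoGramianAux3

attribute [local instance] Matrix.frobeniusNormedAddCommGroup Matrix.frobeniusNormedRing
  Matrix.frobeniusNormedAlgebra Matrix.frobeniusNormedSpace

variable {n : ℕ} {A J : Matrix (Fin n) (Fin n) ℝ}

noncomputable def frobCENorm : ContinuousENorm (Matrix (Fin n) (Fin n) ℝ) :=
  SeminormedAddGroup.toContinuousENorm

def frobPMS : TopologicalSpace.PseudoMetrizableSpace (Matrix (Fin n) (Fin n) ℝ) :=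
  PseudoEMetricSpace.pseudoMetrizableSpace

attribute [local instance] frobCENorm frobPMS

theorem F_continuous (M₀ : Matrix (Fin n) (Fin n) ℝ) :
    Continuous (fun t : ℝ => (exp (t • A) - J) * M₀ * (exp (t • A) - J)ᵀ) := by
  have hQ : Continuous fun t : ℝ => exp (t • A) - J :=
    ((NormedSpace.exp_continuous.comp (continuous_id.smul continuous_const))).sub continuous_const
  exact (hQ.mul continuous_const).mul hQ.matrix_transpose

theorem F_integrableOn
    {C c : ℝ} (hC : 0 ≤ C) (hc : 0 < c)
    (hdecay : ∀ t : ℝ, 0 ≤ t → ‖exp (t • A) - J‖ ≤ C * Real.exp (-c * t))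
    (M₀ : Matrix (Fin n) (Fin n) ℝ) :
    IntegrableOn (fun t : ℝ => (exp (t • A) - J) * M₀ * (exp (t • A) - J)ᵀ)
      (Set.Ioi (0:ℝ)) := by
  have hg : IntegrableOn (fun t : ℝ => (C * C * ‖M₀‖) * Real.exp (-(2*c) * t))
      (Set.Ioi (0:ℝ)) := by
    have := (exp_neg_integrableOn_Ioi 0 (by linarith : 0 < 2*c)).const_mul (C * C * ‖M₀‖)
    exact this
  refine Integrable.mono' hg ((F_continuous M₀).aestronglyMeasurable) ?_
  refine (ae_restrict_iff' measurableSet_Ioi).mpr (ae_of_all _ fun t ht => ?_)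
  have ht0 : (0:ℝ) ≤ t := le_of_lt ht
  have h1 := hdecay t ht0
  have hQt0 : (0:ℝ) ≤ ‖exp (t • A) - J‖ := norm_nonneg _
  calc ‖(exp (t • A) - J) * M₀ * (exp (t • A) - J)ᵀ‖
      ≤ ‖(exp (t • A) - J) * M₀‖ * ‖(exp (t • A) - J)ᵀ‖ := norm_mul_le _ _
    _ ≤ ‖exp (t • A) - J‖ * ‖M₀‖ * ‖(exp (t • A) - J)ᵀ‖ := by
        have := norm_mul_le (exp (t • A) - J) M₀
        exact mul_le_mul_of_nonneg_right this (norm_nonneg _)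
    _ = ‖exp (t • A) - J‖ * ‖M₀‖ * ‖exp (t • A) - J‖ := by
        rw [Matrix.frobenius_norm_transpose]
    _ ≤ (C * Real.exp (-c * t)) * ‖M₀‖ * (C * Real.exp (-c * t)) := by
        have hC1 : 0 ≤ C * Real.exp (-c * t) := by positivity
        apply mul_le_mul _ h1 hQt0 (by positivity)
        exact mul_le_mul_of_nonneg_right h1 (norm_nonneg _)
    _ = (C * C * ‖M₀‖) * Real.exp (-(2*c) * t) := by
        rw [show -(2*c) * t = (-c*t) + (-c*t) by ring, Real.exp_add]
        ring

theorem F_tendsto_zero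
    (hJ : Tendsto (fun t : ℝ => exp (t • A) - J) atTop (nhds 0))
    (M₀ : Matrix (Fin n) (Fin n) ℝ) :
    Tendsto (fun t : ℝ => (exp (t • A) - J) * M₀ * (exp (t • A) - J)ᵀ)
      atTop (nhds 0) := by
  have hTr : Tendsto (fun t : ℝ => (exp (t • A) - J)ᵀ) atTop (nhds 0) := by
    have hcont : Continuous fun M : Matrix (Fin n) (Fin n) ℝ => Mᵀ :=
      continuous_id.matrix_transpose
    have := (hcont.tendsto (0 : Matrix (Fin n) (Fin n) ℝ)).comp hJ
    simpa [Function.comp_def] using this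
  have := (hJ.mul_const M₀).mul hTr
  simpa using this

end PseudoGramianAux3


open PseudoGramianAux PseudoGramianAux2 PseudoGramianAux3 in
/-- The pseudo controllability Gramian `𝒫 = ∫₀^∞ (e^{Aτ} − J) B Bᵀ (e^{Aᵀτ} − Jᵀ) dτ`
of a semistable system satisfies `A𝒫 + 𝒫Aᵀ + (I − J)BBᵀ(I − Jᵀ) = 0`. -/
theorem pseudo_controllability_gramian_lyapunov
    {n p : ℕ} (A J P : Matrix (Fin n) (Fin n) ℝ) (B : Matrix (Fin n) (Fin p) ℝ)
    (hJ : Tendsto (fun t : ℝ => exp (t • A)) atTop (nhds J))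
    (hP : ∀ i j, P i j = ∫ τ in Set.Ioi (0:ℝ),
      (((exp (τ • A) - J) * (B * Bᵀ) * (exp (τ • A) - J)ᵀ) i j)) :
    A * P + P * Aᵀ + (1 - J) * (B * Bᵀ) * (1 - Jᵀ) = 0 := by
  classical
  letI : NormedAddCommGroup (Matrix (Fin n) (Fin n) ℝ) := Matrix.frobeniusNormedAddCommGroup
  letI : NormedRing (Matrix (Fin n) (Fin n) ℝ) := Matrix.frobeniusNormedRing
  letI : NormedAlgebra ℝ (Matrix (Fin n) (Fin n) ℝ) := Matrix.frobeniusNormedAlgebra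
  letI : ContinuousENorm (Matrix (Fin n) (Fin n) ℝ) := frobCENorm
  set F : ℝ → Matrix (Fin n) (Fin n) ℝ :=
    fun τ => (exp (τ • A) - J) * (B * Bᵀ) * (exp (τ • A) - J)ᵀ with hF
  obtain ⟨C, c, hC, hc, hdecay⟩ := decay hJ
  have hFint : IntegrableOn F (Set.Ioi (0:ℝ)) := F_integrableOn hC hc hdecay _
  have hAJ : A * J = 0 := A_mul_J hJ
  have hderiv : ∀ τ ∈ Set.Ici (0:ℝ), HasDerivAt F (A * F τ + F τ * Aᵀ) τ :=
    fun τ _ => F_hasDerivAt hAJ _ τ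
  have htend : Tendsto F atTop (nhds 0) := F_tendsto_zero (Q_tendsto_zero hJ) _
  have hderint : IntegrableOn (fun τ => A * F τ + F τ * Aᵀ) (Set.Ioi (0:ℝ)) :=
    (hFint.const_mul A).add (hFint.mul_const Aᵀ)
  have hFTC : (∫ τ in Set.Ioi (0:ℝ), (A * F τ + F τ * Aᵀ)) = 0 - F 0 :=
    integral_Ioi_of_hasDerivAt_of_tendsto' hderiv hderint htend
  set Pint : Matrix (Fin n) (Fin n) ℝ := ∫ τ in Set.Ioi (0:ℝ), F τ with hPint
  have hPeq : P = Pint := by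
    ext i j
    rw [hP i j]
    let L : Matrix (Fin n) (Fin n) ℝ →L[ℝ] ℝ :=
      LinearMap.toContinuousLinearMap
        { toFun := fun M => M i j, map_add' := fun _ _ => rfl, map_smul' := fun _ _ => rfl }
    have h := L.integral_comp_comm hFint
    have hL : ∀ M : Matrix (Fin n) (Fin n) ℝ, L M = M i j := fun _ => rfl
    exact h
  have hLmul := (ContinuousLinearMap.mul ℝ (Matrix (Fin n) (Fin n) ℝ) A).integral_comp_comm hFint
  have hRmul := ((ContinuousLinearMap.mul ℝ (Matrix (Fin n) (Fin n) ℝ)).flip Aᵀ).integral_comp_comm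
    hFint
  simp only [ContinuousLinearMap.mul_apply', ContinuousLinearMap.flip_apply] at hLmul hRmul
  have hsplit : (∫ τ in Set.Ioi (0:ℝ), (A * F τ + F τ * Aᵀ)) = A * Pint + Pint * Aᵀ := by
    rw [integral_add (hFint.const_mul A) (hFint.mul_const Aᵀ), hLmul, hRmul]
  have hF0 : F 0 = (1 - J) * (B * Bᵀ) * (1 - Jᵀ) := by
    simp only [hF, zero_smul, exp_zero, transpose_sub, transpose_one]
  rw [hPeq, hF0.symm]
  rw [hsplit] at hFTC
  rw [hFTC]
  abel
end

section
/- For a semistable matrix A with J := lim_{t→∞} e^{At}, the pair of equations {A X + X Aᵀ + (I−J)BBᵀ(I−Jᵀ) = 0, J X Jᵀ = 0} has at most one symmetric solution X. -/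
open Matrix Filter NormedSpace

lemma exp_intertwine_aux {m : ℕ} (M N Δ : Matrix (Fin m) (Fin m) ℝ) (h : M * Δ = Δ * N) :
    exp M * Δ = Δ * exp N := by
  letI : SeminormedRing (Matrix (Fin m) (Fin m) ℝ) := Matrix.linftyOpSemiNormedRing
  letI : NormedRing (Matrix (Fin m) (Fin m) ℝ) := Matrix.linftyOpNormedRing
  letI : NormedAlgebra ℝ (Matrix (Fin m) (Fin m) ℝ) := Matrix.linftyOpNormedAlgebra
  have hk : ∀ k : ℕ, M ^ k * Δ = Δ * N ^ k := by
    intro k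
    induction k with
    | zero => simp
    | succ k ih => rw [pow_succ, mul_assoc, h, ← mul_assoc, ih, mul_assoc, ← pow_succ]
  simp only [exp_eq_tsum ℝ]
  erw [← (expSeries_summable' (𝕂 := ℝ) M).tsum_mul_right Δ,
    ← (expSeries_summable' (𝕂 := ℝ) N).tsum_mul_left Δ]
  congr 1
  funext k
  rw [smul_mul_assoc, mul_smul_comm, hk]

/-- For a semistable matrix `A` with `J := lim_{t→∞} e^{At}`, the pair of equations
`A X + X Aᵀ + (I−J)BBᵀ(I−Jᵀ) = 0` and `J X Jᵀ = 0` has at most one symmetric solution. -/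
theorem pseudo_gramian_equations_unique_symmetric_solution
    {n p : ℕ} (A J : Matrix (Fin n) (Fin n) ℝ) (B : Matrix (Fin n) (Fin p) ℝ)
    (hJ : Tendsto (fun t : ℝ => exp (t • A)) atTop (nhds J)) :
    ∀ X Y : Matrix (Fin n) (Fin n) ℝ, Xᵀ = X → Yᵀ = Y →
      A * X + X * Aᵀ + (1 - J) * (B * Bᵀ) * (1 - Jᵀ) = 0 → J * X * Jᵀ = 0 →
      A * Y + Y * Aᵀ + (1 - J) * (B * Bᵀ) * (1 - Jᵀ) = 0 → J * Y * Jᵀ = 0 →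
      X = Y := by
  intro X Y _ _ hX hJX hY hJY
  set Δ := X - Y with hΔ
  have hlyap : A * Δ = Δ * (-Aᵀ) := by
    have h0 : A * X + X * Aᵀ = A * Y + Y * Aᵀ := add_right_cancel (hX.trans hY.symm)
    have h1 : A * X - A * Y = Y * Aᵀ - X * Aᵀ := by
      rw [sub_eq_sub_iff_add_eq_add, h0, add_comm]
    rw [hΔ, mul_sub, sub_mul, mul_neg, mul_neg, sub_neg_eq_add, neg_add_eq_sub, h1]
  have hconst : ∀ t : ℝ, exp (t • A) * Δ * (exp (t • A))ᵀ = Δ := by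
    intro t
    have h1 : (t • A) * Δ = Δ * (-(t • Aᵀ)) := by
      simp [smul_mul_assoc, hlyap, mul_smul_comm, smul_neg, mul_neg]
    have h2 : exp (t • A) * Δ = Δ * exp (-(t • Aᵀ)) := by
      simpa using exp_intertwine_aux (t • A) (-(t • Aᵀ)) Δ h1
    have h3 : (exp (t • A))ᵀ = exp (t • Aᵀ) := by
      rw [← Matrix.exp_transpose, transpose_smul]
    have h4 : exp (-(t • Aᵀ)) * exp (t • Aᵀ) = 1 := by
      rw [← Matrix.exp_add_of_commute _ _ ((Commute.refl (t • Aᵀ)).neg_left),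
        neg_add_cancel, exp_zero]
    rw [h3, h2, mul_assoc, h4, mul_one]
  have hcont : Continuous fun Z : Matrix (Fin n) (Fin n) ℝ => Z * Δ * Zᵀ :=
    (continuous_id.matrix_mul continuous_const).matrix_mul continuous_id.matrix_transpose
  have hlim : Tendsto (fun t : ℝ => exp (t • A) * Δ * (exp (t • A))ᵀ) atTop
      (nhds (J * Δ * Jᵀ)) := (hcont.tendsto J).comp hJ
  have heq : Δ = J * Δ * Jᵀ := by
    refine tendsto_nhds_unique ?_ hlim
    simp only [hconst]
    exact tendsto_const_nhds
  have hzero : J * Δ * Jᵀ = 0 := by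
    rw [hΔ]
    simp only [mul_sub, sub_mul]
    rw [hJX, hJY, sub_zero]
  have : Δ = 0 := heq.trans hzero
  exact sub_eq_zero.mp this
end

section
/- If 𝒫ₐ is any symmetric solution of A𝒫ₐ + 𝒫ₐAᵀ + (I−J)BBᵀ(I−Jᵀ) = 0 for a semistable A, then the unique solution also satisfying J X Jᵀ = 0 is 𝒫 = 𝒫ₐ − J 𝒫ₐ Jᵀ. -/
open Matrix Filter NormedSpace

section Aux

attribute [local instance] Matrix.linftyOpNormedRing Matrix.linftyOpNormedAlgebra

variable {n : ℕ}

private lemma aux_J_mul_exp {A J : Matrix (Fin n) (Fin n) ℝ}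
    (hJ : Tendsto (fun t : ℝ => exp (t • A)) atTop (nhds J)) (s : ℝ) :
    J * exp (s • A) = J := by
  have h1 : Tendsto (fun t : ℝ => exp ((t + s) • A)) atTop (nhds J) :=
    hJ.comp (tendsto_atTop_add_const_right atTop s tendsto_id)
  have h2 : ∀ t : ℝ, exp ((t + s) • A) = exp (t • A) * exp (s • A) := by
    intro t
    rw [add_smul]
    exact exp_add_of_commute ((Commute.refl A).smul_left t |>.smul_right s)
  simp only [h2] at h1
  exact tendsto_nhds_unique (hJ.mul tendsto_const_nhds) h1

private lemma aux_exp_mul_J {A J : Matrix (Fin n) (Fin n) ℝ}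
    (hJ : Tendsto (fun t : ℝ => exp (t • A)) atTop (nhds J)) (s : ℝ) :
    exp (s • A) * J = J := by
  have h1 : Tendsto (fun t : ℝ => exp ((s + t) • A)) atTop (nhds J) :=
    hJ.comp (tendsto_atTop_add_const_left atTop s tendsto_id)
  have h2 : ∀ t : ℝ, exp ((s + t) • A) = exp (s • A) * exp (t • A) := by
    intro t
    rw [add_smul]
    exact exp_add_of_commute ((Commute.refl A).smul_left s |>.smul_right t)
  simp only [h2] at h1
  exact tendsto_nhds_unique (tendsto_const_nhds.mul hJ) h1

private lemma aux_JJ {A J : Matrix (Fin n) (Fin n) ℝ}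
    (hJ : Tendsto (fun t : ℝ => exp (t • A)) atTop (nhds J)) : J * J = J := by
  have h1 : Tendsto (fun t : ℝ => J * exp (t • A)) atTop (nhds (J * J)) :=
    tendsto_const_nhds.mul hJ
  simp only [aux_J_mul_exp hJ] at h1
  exact tendsto_nhds_unique h1 tendsto_const_nhds

private lemma aux_JA {A J : Matrix (Fin n) (Fin n) ℝ}
    (hJ : Tendsto (fun t : ℝ => exp (t • A)) atTop (nhds J)) : J * A = 0 := by
  have h1 : HasDerivAt (fun t : ℝ => J * exp (t • A)) (J * (exp ((0:ℝ) • A) * A)) 0 :=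
    (hasDerivAt_exp_smul_const A (0:ℝ)).const_mul J
  have h2 : (fun t : ℝ => J * exp (t • A)) = fun _ : ℝ => J := by
    funext t; exact aux_J_mul_exp hJ t
  rw [h2] at h1
  have h3 : HasDerivAt (fun _ : ℝ => J) (0 : Matrix (Fin n) (Fin n) ℝ) 0 := hasDerivAt_const _ _
  have := h1.unique h3
  simpa [zero_smul, exp_zero] using this

private lemma aux_AJ {A J : Matrix (Fin n) (Fin n) ℝ}
    (hJ : Tendsto (fun t : ℝ => exp (t • A)) atTop (nhds J)) : A * J = 0 := by
  have h1 : HasDerivAt (fun t : ℝ => exp (t • A) * J) (A * exp ((0:ℝ) • A) * J) 0 :=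
    (hasDerivAt_exp_smul_const' A (0:ℝ)).mul_const J
  have h2 : (fun t : ℝ => exp (t • A) * J) = fun _ : ℝ => J := by
    funext t; exact aux_exp_mul_J hJ t
  rw [h2] at h1
  have h3 : HasDerivAt (fun _ : ℝ => J) (0 : Matrix (Fin n) (Fin n) ℝ) 0 := hasDerivAt_const _ _
  have := h1.unique h3
  simpa [zero_smul, exp_zero] using this

/-- Uniqueness core: a matrix `D` with `A D + D Aᵀ = 0` and `J D Jᵀ = 0` is zero. -/
private lemma aux_unique {A J D : Matrix (Fin n) (Fin n) ℝ}
    (hJ : Tendsto (fun t : ℝ => exp (t • A)) atTop (nhds J))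
    (hD : A * D + D * Aᵀ = 0) (hDJ : J * D * Jᵀ = 0) : D = 0 := by
  set f : ℝ → Matrix (Fin n) (Fin n) ℝ := fun t => exp (t • A) * D * exp (t • Aᵀ) with hf
  have hderiv : ∀ t : ℝ, HasDerivAt f 0 t := by
    intro t
    have h1 : HasDerivAt (fun t : ℝ => exp (t • A)) (A * exp (t • A)) t :=
      hasDerivAt_exp_smul_const' A t
    have h2 : HasDerivAt (fun t : ℝ => exp (t • Aᵀ)) (exp (t • Aᵀ) * Aᵀ) t :=
      hasDerivAt_exp_smul_const Aᵀ t
    have h3 := (h1.mul_const D).mul h2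
    have key : A * exp (t • A) * D * exp (t • Aᵀ)
          + exp (t • A) * D * (exp (t • Aᵀ) * Aᵀ) = 0 := by
      have hcA : A * exp (t • A) = exp (t • A) * A :=
        (((Commute.refl A).smul_left t).exp_left).symm
      have hcAT : exp (t • Aᵀ) * Aᵀ = Aᵀ * exp (t • Aᵀ) :=
        ((Commute.refl Aᵀ).smul_left t).exp_left
      have hT : exp (t • Aᵀ) = (exp (t • A))ᵀ := by
        rw [← transpose_smul, Matrix.exp_transpose]
      calc A * exp (t • A) * D * exp (t • Aᵀ)
            + exp (t • A) * D * (exp (t • Aᵀ) * Aᵀ)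
          = exp (t • A) * (A * D + D * Aᵀ) * exp (t • Aᵀ) := by
            rw [hcA, hcAT]; noncomm_ring
        _ = 0 := by rw [hD, mul_zero, zero_mul]
    rw [key] at h3
    exact h3
  have hconst : ∀ t : ℝ, f t = f 0 := by
    intro t
    exact is_const_of_deriv_eq_zero (fun x => (hderiv x).differentiableAt)
      (fun x => (hderiv x).deriv) t 0
  have hf0 : f 0 = D := by simp [hf, zero_smul, exp_zero]
  have hT : ∀ t : ℝ, exp (t • Aᵀ) = (exp (t • A))ᵀ := by
    intro t; rw [← transpose_smul, Matrix.exp_transpose]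
  have hlim : Tendsto f atTop (nhds (J * D * Jᵀ)) := by
    have hJT : Tendsto (fun t : ℝ => exp (t • Aᵀ)) atTop (nhds Jᵀ) := by
      simp only [hT]
      exact ((Continuous.matrix_transpose continuous_id).tendsto J).comp hJ
    exact (hJ.mul_const D).mul hJT
  have hlim' : Tendsto f atTop (nhds D) := by
    have : f = fun _ : ℝ => D := by funext t; rw [hconst t, hf0]
    rw [this]; exact tendsto_const_nhds
  have := tendsto_nhds_unique hlim' hlim
  rw [this, hDJ]

end Aux

/-- If `𝒫ₐ` is any symmetric solution of the Lyapunov equation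
`A𝒫ₐ + 𝒫ₐAᵀ + (I−J)BBᵀ(I−Jᵀ) = 0` for a semistable `A`, then `𝒫 := 𝒫ₐ − J 𝒫ₐ Jᵀ`
also solves the Lyapunov equation, satisfies `J 𝒫 Jᵀ = 0`, and is the unique
symmetric matrix with these two properties. -/
theorem pseudo_gramian_from_arbitrary_lyapunov_solution
    {n p : ℕ} (A J Pa : Matrix (Fin n) (Fin n) ℝ) (B : Matrix (Fin n) (Fin p) ℝ)
    (hJ : Tendsto (fun t : ℝ => exp (t • A)) atTop (nhds J))
    (hPa_symm : Paᵀ = Pa)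
    (hPa : A * Pa + Pa * Aᵀ + (1 - J) * (B * Bᵀ) * (1 - Jᵀ) = 0) :
    (A * (Pa - J * Pa * Jᵀ) + (Pa - J * Pa * Jᵀ) * Aᵀ
        + (1 - J) * (B * Bᵀ) * (1 - Jᵀ) = 0
      ∧ J * (Pa - J * Pa * Jᵀ) * Jᵀ = 0)
    ∧ ∀ X : Matrix (Fin n) (Fin n) ℝ, Xᵀ = X →
        A * X + X * Aᵀ + (1 - J) * (B * Bᵀ) * (1 - Jᵀ) = 0 → J * X * Jᵀ = 0 →
        X = Pa - J * Pa * Jᵀ := by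
  have hAJ : A * J = 0 := aux_AJ hJ
  have hJA : J * A = 0 := aux_JA hJ
  have hJJ : J * J = J := aux_JJ hJ
  have hJtAt : Jᵀ * Aᵀ = 0 := by rw [← transpose_mul, hAJ, transpose_zero]
  have hJtJt : Jᵀ * Jᵀ = Jᵀ := by rw [← transpose_mul, hJJ]
  have e1 : A * (J * Pa * Jᵀ) = 0 := by
    rw [← mul_assoc, ← mul_assoc, hAJ, zero_mul, zero_mul]
  have e2 : J * Pa * Jᵀ * Aᵀ = 0 := by
    rw [mul_assoc, hJtAt, mul_zero]
  have ha : A * (Pa - J * Pa * Jᵀ) + (Pa - J * Pa * Jᵀ) * Aᵀ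
      + (1 - J) * (B * Bᵀ) * (1 - Jᵀ) = 0 := by
    rw [mul_sub, sub_mul, e1, e2, sub_zero, sub_zero]
    exact hPa
  have hb : J * (Pa - J * Pa * Jᵀ) * Jᵀ = 0 := by
    have : J * (J * Pa * Jᵀ) * Jᵀ = J * Pa * Jᵀ := by
      calc J * (J * Pa * Jᵀ) * Jᵀ = (J * J) * Pa * (Jᵀ * Jᵀ) := by noncomm_ring
        _ = J * Pa * Jᵀ := by rw [hJJ, hJtJt]
    rw [mul_sub, sub_mul, this, sub_self]
  refine ⟨⟨ha, hb⟩, ?_⟩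
  intro X _hXsymm hX hXJ
  have hD : A * (X - (Pa - J * Pa * Jᵀ)) + (X - (Pa - J * Pa * Jᵀ)) * Aᵀ = 0 := by
    have := sub_eq_zero.mpr (hX.trans ha.symm)
    calc A * (X - (Pa - J * Pa * Jᵀ)) + (X - (Pa - J * Pa * Jᵀ)) * Aᵀ
        = (A * X + X * Aᵀ + (1 - J) * (B * Bᵀ) * (1 - Jᵀ))
          - (A * (Pa - J * Pa * Jᵀ) + (Pa - J * Pa * Jᵀ) * Aᵀ
            + (1 - J) * (B * Bᵀ) * (1 - Jᵀ)) := by noncomm_ring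
      _ = 0 := by rw [hX, ha, sub_zero]
  have hDJ : J * (X - (Pa - J * Pa * Jᵀ)) * Jᵀ = 0 := by
    calc J * (X - (Pa - J * Pa * Jᵀ)) * Jᵀ
        = J * X * Jᵀ - J * (Pa - J * Pa * Jᵀ) * Jᵀ := by noncomm_ring
      _ = 0 := by rw [hXJ, hb, sub_zero]
  have := aux_unique hJ hD hDJ
  exact sub_eq_zero.mp this
end

section
/- If symmetric matrices 𝒫₁ and 𝒫₂ both satisfy the Lyapunov equation A X + X Aᵀ = −Q (same right-hand side) for a semistable A, then 𝒫₁ − 𝒫₂ = J (𝒫₁ − 𝒫₂) Jᵀ where J := lim_{t→∞} e^{At}. -/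
open Matrix Filter NormedSpace

attribute [local instance] Matrix.linftyOpNormedRing Matrix.linftyOpNormedAlgebra

/-- If symmetric matrices `𝒫₁` and `𝒫₂` both satisfy the Lyapunov equation
`A X + X Aᵀ = −Q` for a semistable `A`, then `𝒫₁ − 𝒫₂ = J (𝒫₁ − 𝒫₂) Jᵀ`
where `J := lim_{t→∞} e^{At}`. -/
theorem lyapunov_solutions_differ_by_JXJ
    {n : ℕ} (A J Q P1 P2 : Matrix (Fin n) (Fin n) ℝ)
    (hJ : Tendsto (fun t : ℝ => exp (t • A)) atTop (nhds J))
    (hP1_symm : P1ᵀ = P1) (hP2_symm : P2ᵀ = P2)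
    (hP1 : A * P1 + P1 * Aᵀ = -Q) (hP2 : A * P2 + P2 * Aᵀ = -Q) :
    P1 - P2 = J * (P1 - P2) * Jᵀ := by
  set X := P1 - P2 with hXdef
  have hAX : A * X + X * Aᵀ = 0 := by
    have habel : A * X + X * Aᵀ = (A * P1 + P1 * Aᵀ) - (A * P2 + P2 * Aᵀ) := by
      simp only [hXdef, mul_sub, sub_mul]; abel
    rw [habel, hP1, hP2, sub_self]
  -- the function t ↦ exp(tA) X exp(tAᵀ)
  set f : ℝ → Matrix (Fin n) (Fin n) ℝ :=
    fun t => exp (t • A) * X * exp (t • Aᵀ) with hfdef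
  have hderiv : ∀ t : ℝ, HasDerivAt f 0 t := by
    intro t
    have hE : HasDerivAt (fun u : ℝ => exp (u • A)) (A * exp (t • A)) t :=
      hasDerivAt_exp_smul_const' A t
    have hF : HasDerivAt (fun u : ℝ => exp (u • Aᵀ)) (exp (t • Aᵀ) * Aᵀ) t :=
      hasDerivAt_exp_smul_const Aᵀ t
    have h := (hE.mul_const X).mul hF
    have hcommA : A * exp (t • A) = exp (t • A) * A := by
      have : Commute A (t • A) := (Commute.refl A).smul_right t
      exact ((this.exp_right).symm.eq).symm
    have hcommAT : exp (t • Aᵀ) * Aᵀ = Aᵀ * exp (t • Aᵀ) := by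
      have : Commute Aᵀ (t • Aᵀ) := (Commute.refl Aᵀ).smul_right t
      exact ((this.exp_right).eq).symm
    have hzero : A * exp (t • A) * X * exp (t • Aᵀ) +
        exp (t • A) * X * (exp (t • Aᵀ) * Aᵀ) = 0 := by
      rw [hcommA, hcommAT]
      calc exp (t • A) * A * X * exp (t • Aᵀ) +
            exp (t • A) * X * (Aᵀ * exp (t • Aᵀ))
          = exp (t • A) * (A * X + X * Aᵀ) * exp (t • Aᵀ) := by
            noncomm_ring
        _ = 0 := by rw [hAX, mul_zero, zero_mul]
    rw [hzero] at h
    exact h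
  have hconst : ∀ t : ℝ, f t = f 0 := by
    intro t
    exact is_const_of_deriv_eq_zero (fun x => (hderiv x).differentiableAt)
      (fun x => (hderiv x).deriv) t 0
  have hf0 : f 0 = X := by
    simp [hfdef, exp_zero]
  -- limit of f as t → ∞
  have hJT : Tendsto (fun t : ℝ => exp (t • Aᵀ)) atTop (nhds Jᵀ) := by
    have : (fun t : ℝ => exp (t • Aᵀ)) = fun t : ℝ => (exp (t • A))ᵀ := by
      funext t
      rw [← transpose_smul, Matrix.exp_transpose]
    rw [this]
    exact ((continuous_id.matrix_transpose).tendsto J).comp hJ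
  have hlim : Tendsto f atTop (nhds (J * X * Jᵀ)) :=
    ((hJ.mul tendsto_const_nhds).mul hJT)
  have hlim' : Tendsto f atTop (nhds X) := by
    rw [show f = fun _ : ℝ => X from funext fun t => (hconst t).trans hf0]
    exact tendsto_const_nhds
  exact tendsto_nhds_unique hlim' hlim
end

section
/- Let A be semistable with the rows of Vᵀ spanning ker(Aᵀ) and the finite-time pseudo controllability Gramian 𝒫(0,t_f) = ∫₀^{t_f}(e^{Aτ}−J)BBᵀ(e^{Aᵀτ}−Jᵀ)dτ. If the pair (A,B) is controllable on [0,t_f], then ker(𝒫(0,t_f)) = im(V), and hence rank(𝒫(0,t_f)) = n − m, where m = dim ker(A). -/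
open Matrix Filter NormedSpace MeasureTheory

private lemma exp_mul_eq_of_mul_eq_zero {n m : ℕ} (M : Matrix (Fin n) (Fin n) ℝ)
    (N : Matrix (Fin n) (Fin m) ℝ) (h : M * N = 0) : NormedSpace.exp M * N = N := by
  letI : SeminormedRing (Matrix (Fin n) (Fin n) ℝ) := Matrix.linftyOpSemiNormedRing
  letI : NormedRing (Matrix (Fin n) (Fin n) ℝ) := Matrix.linftyOpNormedRing
  letI : NormedAlgebra ℝ (Matrix (Fin n) (Fin n) ℝ) := Matrix.linftyOpNormedAlgebra
  have hs := exp_series_hasSum_exp' (𝕂 := ℝ) M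
  let φ : Matrix (Fin n) (Fin n) ℝ →+ Matrix (Fin n) (Fin m) ℝ :=
    AddMonoidHom.mk' (fun X => X * N) (fun a b => Matrix.add_mul a b N)
  have hmap : HasSum (fun k : ℕ => (((Nat.factorial k : ℝ))⁻¹ • M ^ k) * N) (NormedSpace.exp M * N) :=
    hs.map φ (continuous_id.matrix_mul continuous_const)
  have heq : (fun k : ℕ => (((Nat.factorial k : ℝ))⁻¹ • M ^ k) * N)
      = fun k : ℕ => ((Nat.factorial k : ℝ))⁻¹ • (M ^ k * N) := by
    funext k; rw [Matrix.smul_mul]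
  rw [heq] at hmap
  have h0 : ∀ k : ℕ, k ≠ 0 → ((Nat.factorial k : ℝ))⁻¹ • (M ^ k * N) = 0 := by
    intro k hk
    obtain ⟨j, rfl⟩ := Nat.exists_eq_succ_of_ne_zero hk
    rw [pow_succ, Matrix.mul_assoc, h, Matrix.mul_zero, smul_zero]
  have h1 := hasSum_single (f := fun k : ℕ => ((Nat.factorial k : ℝ))⁻¹ • (M ^ k * N)) 0 h0
  simpa using hmap.unique h1

private lemma exp_smul_continuous {n : ℕ} (A : Matrix (Fin n) (Fin n) ℝ) :
    Continuous fun τ : ℝ => NormedSpace.exp (τ • A) := by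
  letI : SeminormedRing (Matrix (Fin n) (Fin n) ℝ) := Matrix.linftyOpSemiNormedRing
  letI : NormedRing (Matrix (Fin n) (Fin n) ℝ) := Matrix.linftyOpNormedRing
  letI : NormedAlgebra ℝ (Matrix (Fin n) (Fin n) ℝ) := Matrix.linftyOpNormedAlgebra
  exact (continuous_iff_continuousAt.2 fun x => (exp_analytic (𝕂 := ℝ) x).continuousAt).comp
    (continuous_id.smul continuous_const)

private lemma dot_integral {n : ℕ} {s : Set ℝ} (P : Matrix (Fin n) (Fin n) ℝ)
    (g : ℝ → Matrix (Fin n) (Fin n) ℝ)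
    (hP : ∀ i j, P i j = ∫ τ in s, g τ i j)
    (hint : ∀ i j, IntegrableOn (fun τ => g τ i j) s) (x y : Fin n → ℝ) :
    x ⬝ᵥ (P *ᵥ y) = ∫ τ in s, x ⬝ᵥ (g τ *ᵥ y) := by
  have key : ∀ i j, x i * (P i j * y j) = ∫ τ in s, x i * (g τ i j * y j) := by
    intro i j
    rw [hP i j, ← integral_mul_const, ← integral_const_mul]
  simp only [Matrix.mulVec, dotProduct]
  calc ∑ i, x i * ∑ j, P i j * y j = ∑ i, ∑ j, x i * (P i j * y j) := by
        simp_rw [Finset.mul_sum]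
    _ = ∑ i, ∑ j, ∫ τ in s, x i * (g τ i j * y j) := by simp_rw [key]
    _ = ∑ i, ∫ τ in s, ∑ j, x i * (g τ i j * y j) := by
        refine Finset.sum_congr rfl fun i _ => ?_
        rw [integral_finset_sum]
        exact fun j _ => ((hint i j).mul_const _).const_mul _
    _ = ∫ τ in s, ∑ i, ∑ j, x i * (g τ i j * y j) := by
        rw [integral_finset_sum]
        exact fun i _ => integrable_finset_sum _
          fun j _ => ((hint i j).mul_const _).const_mul _
    _ = ∫ τ in s, ∑ i, x i * ∑ j, g τ i j * y j := by simp_rw [Finset.mul_sum]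

private lemma quad_factor {n p : ℕ} (M : Matrix (Fin n) (Fin n) ℝ)
    (B : Matrix (Fin n) (Fin p) ℝ) (x : Fin n → ℝ) :
    x ⬝ᵥ ((M * (B * Bᵀ) * Mᵀ) *ᵥ x) =
      (Bᵀ *ᵥ (Mᵀ *ᵥ x)) ⬝ᵥ (Bᵀ *ᵥ (Mᵀ *ᵥ x)) := by
  rw [← Matrix.mulVec_mulVec, ← Matrix.mulVec_mulVec, ← Matrix.mulVec_mulVec,
    dotProduct_mulVec, ← Matrix.mulVec_transpose, dotProduct_mulVec,
    ← Matrix.mulVec_transpose]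

/-- For a semistable `A` with `J = UVᵀ`, `im(U) = ker(A)`, `im(V) = ker(Aᵀ)`,
`VᵀU = Iₘ`: if `(A,B)` is controllable on `[0,t_f]` (finite-time controllability
Gramian positive definite), then the finite-time pseudo controllability Gramian
`𝒫(0,t_f) = ∫₀^{t_f}(e^{Aτ}−J)BBᵀ(e^{Aᵀτ}−Jᵀ)dτ` has kernel `im(V)` and rank `n − m`. -/
theorem finite_time_pseudo_gramian_kernel_and_rank
    {n m p : ℕ} (A : Matrix (Fin n) (Fin n) ℝ)
    (U V : Matrix (Fin n) (Fin m) ℝ) (B : Matrix (Fin n) (Fin p) ℝ)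
    (tf : ℝ) (htf : 0 < tf)
    (W Pf : Matrix (Fin n) (Fin n) ℝ)
    (hJ : Tendsto (fun t : ℝ => NormedSpace.exp (t • A)) atTop (nhds (U * Vᵀ)))
    (hU : ∀ x : Fin n → ℝ, A *ᵥ x = 0 ↔ ∃ c : Fin m → ℝ, x = U *ᵥ c)
    (hV : ∀ x : Fin n → ℝ, Aᵀ *ᵥ x = 0 ↔ ∃ c : Fin m → ℝ, x = V *ᵥ c)
    (hVU : Vᵀ * U = 1)
    (hW : ∀ i j, W i j = ∫ τ in Set.Ioc (0:ℝ) tf,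
      ((NormedSpace.exp (τ • A) * (B * Bᵀ) * (NormedSpace.exp (τ • A))ᵀ) i j))
    (hWpos : W.PosDef)
    (hPf : ∀ i j, Pf i j = ∫ τ in Set.Ioc (0:ℝ) tf,
      (((NormedSpace.exp (τ • A) - U * Vᵀ) * (B * Bᵀ) * (NormedSpace.exp (τ • A) - U * Vᵀ)ᵀ) i j)) :
    (∀ x : Fin n → ℝ, Pf *ᵥ x = 0 ↔ ∃ c : Fin m → ℝ, x = V *ᵥ c)
    ∧ Pf.rank = n - m := by
  -- basic algebraic facts
  have hUV : Uᵀ * V = (1 : Matrix (Fin m) (Fin m) ℝ) := by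
    have := congrArg Matrix.transpose hVU
    simpa [Matrix.transpose_mul] using this
  have hAtV : Aᵀ * V = 0 := by
    ext i j
    have h1 : Aᵀ *ᵥ (V *ᵥ Pi.single j 1) = 0 := (hV _).mpr ⟨_, rfl⟩
    have h2 := congrFun h1 i
    simpa [Matrix.mul_apply, Matrix.mulVec, dotProduct, Pi.single_apply, Finset.mul_sum,
      mul_ite, Finset.sum_ite_eq'] using h2
  have hexpT : ∀ τ : ℝ, (NormedSpace.exp (τ • A))ᵀ = NormedSpace.exp (τ • Aᵀ) := by
    intro τ
    rw [← Matrix.exp_transpose, Matrix.transpose_smul]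
  have hexpV : ∀ τ : ℝ, NormedSpace.exp (τ • Aᵀ) * V = V := by
    intro τ
    exact exp_mul_eq_of_mul_eq_zero _ _ (by rw [Matrix.smul_mul, hAtV, smul_zero])
  -- the transpose of exp fixes Jᵀ and kills V through (E - J)ᵀ
  have hMtV : ∀ τ : ℝ, (NormedSpace.exp (τ • A) - U * Vᵀ)ᵀ * V = 0 := by
    intro τ
    rw [Matrix.transpose_sub, Matrix.sub_mul, hexpT, hexpV, Matrix.transpose_mul,
      Matrix.transpose_transpose, Matrix.mul_assoc, hUV, Matrix.mul_one, sub_self]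
  have hEJ : ∀ τ : ℝ, (NormedSpace.exp (τ • A))ᵀ * (U * Vᵀ)ᵀ = (U * Vᵀ)ᵀ := by
    intro τ
    rw [Matrix.transpose_mul, Matrix.transpose_transpose, hexpT,
      ← Matrix.mul_assoc, hexpV]
  -- continuity and integrability of the integrands
  have hcont : Continuous fun τ : ℝ => NormedSpace.exp (τ • A) := exp_smul_continuous A
  have hgcont : Continuous fun τ : ℝ =>
      (NormedSpace.exp (τ • A) - U * Vᵀ) * (B * Bᵀ) * (NormedSpace.exp (τ • A) - U * Vᵀ)ᵀ :=
    (((hcont.sub continuous_const).matrix_mul continuous_const).matrix_mul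
      ((hcont.sub continuous_const).matrix_transpose))
  have hwcont : Continuous fun τ : ℝ =>
      NormedSpace.exp (τ • A) * (B * Bᵀ) * (NormedSpace.exp (τ • A))ᵀ :=
    ((hcont.matrix_mul continuous_const).matrix_mul hcont.matrix_transpose)
  have hgint : ∀ i j, IntegrableOn
      (fun τ => ((NormedSpace.exp (τ • A) - U * Vᵀ) * (B * Bᵀ) * (NormedSpace.exp (τ • A) - U * Vᵀ)ᵀ) i j)
      (Set.Ioc (0:ℝ) tf) := by
    intro i j
    exact (((continuous_apply j).comp ((continuous_apply i).comp hgcont))).integrableOn_Ioc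
  have hwint : ∀ i j, IntegrableOn
      (fun τ => (NormedSpace.exp (τ • A) * (B * Bᵀ) * (NormedSpace.exp (τ • A))ᵀ) i j)
      (Set.Ioc (0:ℝ) tf) := by
    intro i j
    exact (((continuous_apply j).comp ((continuous_apply i).comp hwcont))).integrableOn_Ioc
  -- the kernel characterization
  have hker : ∀ x : Fin n → ℝ, Pf *ᵥ x = 0 ↔ ∃ c : Fin m → ℝ, x = V *ᵥ c := by
    intro x
    constructor
    · intro hx
      -- quadratic form of Pf at x vanishes
      have h0 : x ⬝ᵥ (Pf *ᵥ x) = 0 := by rw [hx, dotProduct_zero]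
      set w : Fin n → ℝ := x - (U * Vᵀ)ᵀ *ᵥ x with hwdef
      have hw : ∀ τ : ℝ, (NormedSpace.exp (τ • A))ᵀ *ᵥ w = (NormedSpace.exp (τ • A) - U * Vᵀ)ᵀ *ᵥ x := by
        intro τ
        rw [hwdef, Matrix.mulVec_sub, Matrix.mulVec_mulVec, hEJ, Matrix.transpose_sub,
          Matrix.sub_mulVec]
      have hWquad : w ⬝ᵥ (W *ᵥ w) = 0 := by
        have e1 : w ⬝ᵥ (W *ᵥ w) = ∫ τ in Set.Ioc (0:ℝ) tf,
            x ⬝ᵥ (((NormedSpace.exp (τ • A) - U * Vᵀ) * (B * Bᵀ) * (NormedSpace.exp (τ • A) - U * Vᵀ)ᵀ) *ᵥ x) := by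
          rw [dot_integral W _ hW hwint w w]
          refine integral_congr_ae (Eventually.of_forall fun τ => ?_)
          simp only [quad_factor, hw]
        rw [e1, ← dot_integral Pf _ hPf hgint x x, h0]
      by_cases hwz : w = 0
      · refine ⟨Uᵀ *ᵥ x, ?_⟩
        calc x = (U * Vᵀ)ᵀ *ᵥ x := sub_eq_zero.mp hwz
          _ = V *ᵥ (Uᵀ *ᵥ x) := by
            rw [Matrix.transpose_mul, Matrix.transpose_transpose, ← Matrix.mulVec_mulVec]
      · exact absurd hWquad (by
          have := hWpos.dotProduct_mulVec_pos hwz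
          simp only [star_trivial] at this
          exact ne_of_gt this)
    · rintro ⟨c, rfl⟩
      funext i
      have hsingle : (Pf *ᵥ (V *ᵥ c)) i = Pi.single i 1 ⬝ᵥ (Pf *ᵥ (V *ᵥ c)) := by
        simp [dotProduct, Pi.single_apply]
      rw [Pi.zero_apply, hsingle, dot_integral Pf _ hPf hgint]
      have : ∀ τ : ℝ,
          ((NormedSpace.exp (τ • A) - U * Vᵀ) * (B * Bᵀ) * (NormedSpace.exp (τ • A) - U * Vᵀ)ᵀ) *ᵥ (V *ᵥ c)
            = 0 := by
        intro τ
        rw [Matrix.mulVec_mulVec, Matrix.mul_assoc, Matrix.mul_assoc, hMtV, Matrix.mul_zero,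
          Matrix.mul_zero, Matrix.zero_mulVec]
      simp only [this, dotProduct_zero, integral_zero]
  refine ⟨hker, ?_⟩
  -- rank computation
  have hkerlin : LinearMap.ker Pf.mulVecLin = LinearMap.range V.mulVecLin := by
    ext x
    simp only [LinearMap.mem_ker, LinearMap.mem_range, Matrix.mulVecLin_apply]
    rw [hker x]
    exact exists_congr fun c => eq_comm
  have hVinj : Function.Injective V.mulVecLin := by
    intro a b hab
    have h1 := congrArg (fun v => Uᵀ *ᵥ v) hab
    simpa [Matrix.mulVecLin_apply, Matrix.mulVec_mulVec, hUV] using h1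
  have hrn := LinearMap.finrank_range_add_finrank_ker Pf.mulVecLin
  rw [hkerlin, LinearMap.finrank_range_of_inj hVinj] at hrn
  simp only [Module.finrank_fin_fun] at hrn
  have : Pf.rank = Module.finrank ℝ (LinearMap.range Pf.mulVecLin) := rfl
  omega
end

section
/- For a semistable system (A,B,C) with J := lim_{t→∞} e^{At} satisfying CJB = 0, the H₂-norm squared of the transfer function equals tr(C 𝒫 Cᵀ) = tr(Bᵀ 𝒬 B), where 𝒫 and 𝒬 are the pseudo controllability and observability Gramians. -/
open Matrix Filter NormedSpace MeasureTheory

section Aux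

variable {n : ℕ} (A J : Matrix (Fin n) (Fin n) ℝ)

private lemma exp_smul_add (s t : ℝ) :
    exp ((s + t) • A) = exp (s • A) * exp (t • A) := by
  rw [add_smul]
  exact Matrix.exp_add_of_commute _ _
    (((Commute.refl A).smul_left s).smul_right t)

variable (hJ : Tendsto (fun t : ℝ => exp (t • A)) atTop (nhds J))

include hJ

private lemma exp_mul_J (t : ℝ) : exp (t • A) * J = J := by
  have h1 : Tendsto (fun s : ℝ => exp (t • A) * exp (s • A)) atTop
      (nhds (exp (t • A) * J)) := hJ.const_mul _
  have h2 : Tendsto (fun s : ℝ => exp (t • A) * exp (s • A)) atTop (nhds J) := by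
    have := hJ.comp (tendsto_atTop_add_const_left atTop t tendsto_id)
    simpa [Function.comp_def, exp_smul_add A] using this
  exact tendsto_nhds_unique h1 h2

private lemma J_mul_exp (t : ℝ) : J * exp (t • A) = J := by
  have h1 : Tendsto (fun s : ℝ => exp (s • A) * exp (t • A)) atTop
      (nhds (J * exp (t • A))) := hJ.mul_const _
  have h2 : Tendsto (fun s : ℝ => exp (s • A) * exp (t • A)) atTop (nhds J) := by
    have := hJ.comp (tendsto_atTop_add_const_right atTop t tendsto_id)
    simpa [Function.comp_def, exp_smul_add A] using this
  exact tendsto_nhds_unique h1 h2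

private lemma J_mul_J : J * J = J := by
  have h1 : Tendsto (fun s : ℝ => exp (s • A) * J) atTop (nhds (J * J)) :=
    hJ.mul_const _
  have h2 : Tendsto (fun s : ℝ => exp (s • A) * J) atTop (nhds J) := by
    simp only [exp_mul_J A J hJ]
    exact (tendsto_const_nhds : Tendsto (fun _ : ℝ => J) atTop (nhds J))
  exact tendsto_nhds_unique h1 h2

private lemma E_semigroup (s t : ℝ) :
    (exp ((s + t) • A) - J) = (exp (s • A) - J) * (exp (t • A) - J) := by
  rw [sub_mul, mul_sub, mul_sub, exp_mul_J A J hJ, J_mul_exp A J hJ, J_mul_J A J hJ,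
    ← exp_smul_add A]
  abel

end Aux

section Decay

variable {n : ℕ} (A J : Matrix (Fin n) (Fin n) ℝ)
variable (hJ : Tendsto (fun t : ℝ => exp (t • A)) atTop (nhds J))
include hJ

private lemma E_decay :
    ∃ c a : ℝ, 0 < c ∧ 0 < a ∧ ∀ t : ℝ, 0 ≤ t → ∀ i j,
      |(exp (t • A) - J) i j| ≤ c * Real.exp (-a * t) := by
  letI : NormedRing (Matrix (Fin n) (Fin n) ℝ) := Matrix.linftyOpNormedRing
  letI : NormedAlgebra ℝ (Matrix (Fin n) (Fin n) ℝ) := Matrix.linftyOpNormedAlgebra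
  haveI : CompleteSpace (Matrix (Fin n) (Fin n) ℝ) := by infer_instance
  letI : NormedAlgebra ℚ (Matrix (Fin n) (Fin n) ℝ) := NormedAlgebra.restrictScalars ℚ ℝ _
  set E : ℝ → Matrix (Fin n) (Fin n) ℝ := fun t => exp (t • A) - J with hE
  have hEcont : Continuous E := by
    exact (exp_continuous.comp (continuous_id.smul continuous_const)).sub continuous_const
  have hE0 : Tendsto E atTop (nhds 0) := by
    simpa using hJ.sub_const J
  -- pick T with ‖E T‖ ≤ 1/2
  have h12 : ∀ᶠ t in atTop, ‖E t‖ < 1/2 := by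
    have := NormedAddCommGroup.tendsto_nhds_zero.mp hE0 (1/2) (by norm_num)
    exact this
  obtain ⟨T₀, hT₀⟩ := eventually_atTop.mp h12
  set T : ℝ := max T₀ 1 with hT
  have hT1 : (1:ℝ) ≤ T := le_max_right _ _
  have hTpos : 0 < T := lt_of_lt_of_le one_pos hT1
  have hET : ‖E T‖ ≤ 1/2 := (hT₀ T (le_max_left _ _)).le
  -- bound on [0, T]
  obtain ⟨K₀, hK₀⟩ := (isCompact_Icc (a := (0:ℝ)) (b := T)).exists_bound_of_continuousOn
    hEcont.continuousOn
  set K : ℝ := max K₀ 1 with hK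
  have hK1 : (1:ℝ) ≤ K := le_max_right _ _
  have hKb : ∀ t ∈ Set.Icc (0:ℝ) T, ‖E t‖ ≤ K :=
    fun t ht => (hK₀ t ht).trans (le_max_left _ _)
  -- induction bound
  have key : ∀ k : ℕ, ∀ t ∈ Set.Icc (0:ℝ) T, ‖E (t + k * T)‖ ≤ K * (1/2)^k := by
    intro k
    induction k with
    | zero => intro t ht; simpa using hKb t ht
    | succ k ih =>
      intro t ht
      have hsplit : (t + (k+1 : ℕ) * T) = T + (t + k * T) := by push_cast; ring
      have hmul : E (t + (k+1 : ℕ) * T) = E T * E (t + k * T) := by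
        rw [hsplit]; exact E_semigroup A J hJ T (t + k * T)
      calc ‖E (t + (k+1:ℕ) * T)‖ ≤ ‖E T‖ * ‖E (t + k * T)‖ := by rw [hmul]; exact norm_mul_le _ _
        _ ≤ (1/2) * (K * (1/2)^k) := by
            apply mul_le_mul hET (ih t ht) (norm_nonneg _) (by norm_num)
        _ = K * (1/2)^(k+1) := by ring
  refine ⟨2 * K, Real.log 2 / T, by positivity, by positivity, ?_⟩
  intro t ht i j
  -- decompose t = r + k T
  set k : ℕ := ⌊t / T⌋₊ with hk
  have hk1 : (k : ℝ) ≤ t / T := Nat.floor_le (by positivity)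
  have hk2 : t / T < (k : ℝ) + 1 := Nat.lt_floor_add_one _
  have hr1 : 0 ≤ t - k * T := by
    have := (le_div_iff₀ hTpos).mp hk1
    linarith [mul_comm (k:ℝ) T ▸ this]
  have hr2 : t - k * T ≤ T := by
    have := (div_lt_iff₀ hTpos).mp hk2
    nlinarith
  have hb : ‖E t‖ ≤ K * (1/2)^k := by
    have := key k (t - k * T) ⟨hr1, hr2⟩
    simpa using this
  -- (1/2)^k ≤ 2 * exp (-(log 2 / T) * t)
  have hpow : K * (1/2:ℝ)^k ≤ 2 * K * Real.exp (-(Real.log 2 / T) * t) := by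
    have h2 : (1/2:ℝ)^k = Real.exp (-(k : ℝ) * Real.log 2) := by
      have hl : -(k:ℝ) * Real.log 2 = (k:ℝ) * Real.log (1/2) := by
        rw [one_div, Real.log_inv]; ring
      rw [hl, Real.exp_nat_mul, Real.exp_log (by norm_num : (0:ℝ) < 1/2)]
    have hlog : 0 < Real.log 2 := Real.log_pos (by norm_num)
    have hexp : Real.exp (-(k:ℝ) * Real.log 2)
        ≤ 2 * Real.exp (-(Real.log 2 / T) * t) := by
      have h4 : (2:ℝ) * Real.exp (-(Real.log 2 / T) * t)
          = Real.exp (Real.log 2 + -(Real.log 2 / T) * t) := by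
        rw [Real.exp_add, Real.exp_log two_pos]
      rw [h4]
      apply Real.exp_le_exp.mpr
      have ht' : t / T ≤ (k:ℝ) + 1 := hk2.le
      have h3 : -(Real.log 2 / T) * t = -(Real.log 2 * (t / T)) := by
        field_simp
      rw [h3]
      nlinarith [mul_le_mul_of_nonneg_left ht' hlog.le]
    calc K * (1/2:ℝ)^k = K * Real.exp (-(k:ℝ) * Real.log 2) := by rw [h2]
      _ ≤ K * (2 * Real.exp (-(Real.log 2 / T) * t)) := by
          apply mul_le_mul_of_nonneg_left hexp (by positivity)
      _ = 2 * K * Real.exp (-(Real.log 2 / T) * t) := by ring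
  -- entry bound
  have hent : |E t i j| ≤ ‖E t‖ := by
    have h1 : ‖E t i j‖₊ ≤ ∑ l, ‖E t i l‖₊ :=
      Finset.single_le_sum (f := fun l => ‖E t i l‖₊) (fun _ _ => zero_le') (Finset.mem_univ j)
    have h2 : (∑ l, ‖E t i l‖₊) ≤ ‖E t‖₊ := by
      rw [Matrix.linfty_opNNNorm_def]
      exact Finset.le_sup (f := fun i => ∑ j, ‖E t i j‖₊) (Finset.mem_univ i)
    have := h1.trans h2
    exact_mod_cast this
  exact hent.trans (hb.trans hpow)

end Decay

section Integrability

variable {n : ℕ} (A J : Matrix (Fin n) (Fin n) ℝ)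
variable (hJ : Tendsto (fun t : ℝ => exp (t • A)) atTop (nhds J))
include hJ

private lemma E_entry_continuous (a b : Fin n) :
    Continuous (fun τ : ℝ => (exp (τ • A) - J) a b) := by
  letI : NormedRing (Matrix (Fin n) (Fin n) ℝ) := Matrix.linftyOpNormedRing
  letI : NormedAlgebra ℝ (Matrix (Fin n) (Fin n) ℝ) := Matrix.linftyOpNormedAlgebra
  haveI : CompleteSpace (Matrix (Fin n) (Fin n) ℝ) := by infer_instance
  letI : NormedAlgebra ℚ (Matrix (Fin n) (Fin n) ℝ) := NormedAlgebra.restrictScalars ℚ ℝ _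
  have hEcont : Continuous (fun τ : ℝ => exp (τ • A) - J) :=
    (exp_continuous.comp (continuous_id.smul continuous_const)).sub continuous_const
  exact (continuous_apply b).comp ((continuous_apply a).comp hEcont)

private lemma E_mul_integrable (a b c d : Fin n) :
    IntegrableOn
      (fun τ : ℝ => (exp (τ • A) - J) a b * (exp (τ • A) - J) c d)
      (Set.Ioi (0:ℝ)) := by
  obtain ⟨cc, aa, hcc, haa, hbound⟩ := E_decay A J hJ
  have hcont : Continuous
      (fun τ : ℝ => (exp (τ • A) - J) a b * (exp (τ • A) - J) c d) :=
    (E_entry_continuous A J hJ a b).mul (E_entry_continuous A J hJ c d)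
  refine Integrable.mono' (g := fun τ : ℝ =>
      (cc * cc) * Real.exp (-(2 * aa) * τ)) ?_ hcont.aestronglyMeasurable.restrict ?_
  · exact ((exp_neg_integrableOn_Ioi 0 (by positivity)).const_mul _)
  · filter_upwards [ae_restrict_mem measurableSet_Ioi] with τ hτ
    have hτ0 : (0:ℝ) ≤ τ := (le_of_lt hτ)
    have h1 := hbound τ hτ0 a b
    have h2 := hbound τ hτ0 c d
    have hen : (0:ℝ) ≤ cc * Real.exp (-aa * τ) := by positivity
    calc ‖(exp (τ • A) - J) a b * (exp (τ • A) - J) c d‖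
        = |(exp (τ • A) - J) a b| * |(exp (τ • A) - J) c d| := by
          rw [Real.norm_eq_abs, abs_mul]
      _ ≤ (cc * Real.exp (-aa * τ)) * (cc * Real.exp (-aa * τ)) :=
          mul_le_mul h1 h2 (abs_nonneg _) hen
      _ = (cc * cc) * Real.exp (-(2 * aa) * τ) := by
          rw [show -(2 * aa) * τ = -aa * τ + -aa * τ by ring, Real.exp_add]; ring

end Integrability

private lemma integral_trace_eq {m n' : ℕ} (X : Matrix (Fin m) (Fin n') ℝ)
    (M : ℝ → Matrix (Fin n') (Fin n') ℝ) (P : Matrix (Fin n') (Fin n') ℝ)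
    (hint : ∀ i j, IntegrableOn (fun τ => M τ i j) (Set.Ioi (0:ℝ)))
    (hP : ∀ i j, P i j = ∫ τ in Set.Ioi (0:ℝ), M τ i j) :
    (∫ τ in Set.Ioi (0:ℝ), Matrix.trace (X * M τ * Xᵀ)) = Matrix.trace (X * P * Xᵀ) := by
  have hI : ∀ (k : Fin m) (j i : Fin n'),
      Integrable (fun τ => X k i * M τ i j * X k j) (volume.restrict (Set.Ioi (0:ℝ))) :=
    fun k j i => ((hint i j).const_mul (X k i)).mul_const (X k j)
  calc (∫ τ in Set.Ioi (0:ℝ), Matrix.trace (X * M τ * Xᵀ))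
      = ∫ τ in Set.Ioi (0:ℝ), ∑ k, ∑ j, ∑ i, X k i * M τ i j * X k j := by
        apply integral_congr_ae
        filter_upwards with τ
        simp [Matrix.trace, Matrix.diag, Matrix.mul_apply, Finset.sum_mul]
    _ = ∑ k, ∑ j, ∑ i, ∫ τ in Set.Ioi (0:ℝ), X k i * M τ i j * X k j := by
        rw [integral_finset_sum _ (fun k _ => integrable_finset_sum _
          (fun j _ => integrable_finset_sum _ (fun i _ => hI k j i)))]
        refine Finset.sum_congr rfl fun k _ => ?_
        rw [integral_finset_sum _ (fun j _ => integrable_finset_sum _ (fun i _ => hI k j i))]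
        exact Finset.sum_congr rfl fun j _ =>
          integral_finset_sum _ (fun i _ => hI k j i)
    _ = Matrix.trace (X * P * Xᵀ) := by
        simp only [Matrix.trace, Matrix.diag, Matrix.mul_apply, Matrix.transpose_apply,
          Finset.sum_mul]
        refine Finset.sum_congr rfl fun k _ => Finset.sum_congr rfl fun j _ =>
          Finset.sum_congr rfl fun i _ => ?_
        rw [hP i j, ← integral_const_mul, ← integral_mul_const]

/-- For a semistable system `(A,B,C)` with `J := lim_{t→∞} e^{At}` and `CJB = 0`,
the `H₂`-norm squared of the transfer function, i.e.
`∫₀^∞ tr(g(τ)ᵀ g(τ)) dτ` with impulse response `g(τ) = C e^{Aτ} B`,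
equals `tr(C 𝒫 Cᵀ)` and `tr(Bᵀ 𝒬 B)` for the pseudo Gramians `𝒫`, `𝒬`. -/
theorem h2_norm_sq_eq_trace_pseudo_gramians
    {n p q : ℕ} (A J : Matrix (Fin n) (Fin n) ℝ)
    (B : Matrix (Fin n) (Fin p) ℝ) (C : Matrix (Fin q) (Fin n) ℝ)
    (P Q : Matrix (Fin n) (Fin n) ℝ)
    (hJ : Tendsto (fun t : ℝ => exp (t • A)) atTop (nhds J))
    (hCJB : C * J * B = 0)
    (hP : ∀ i j, P i j = ∫ τ in Set.Ioi (0:ℝ),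
      (((exp (τ • A) - J) * (B * Bᵀ) * (exp (τ • A) - J)ᵀ) i j))
    (hQ : ∀ i j, Q i j = ∫ τ in Set.Ioi (0:ℝ),
      (((exp (τ • A) - J)ᵀ * (Cᵀ * C) * (exp (τ • A) - J)) i j)) :
    (∫ τ in Set.Ioi (0:ℝ),
        Matrix.trace ((C * exp (τ • A) * B)ᵀ * (C * exp (τ • A) * B)))
      = Matrix.trace (C * P * Cᵀ)
    ∧ (∫ τ in Set.Ioi (0:ℝ),
        Matrix.trace ((C * exp (τ • A) * B)ᵀ * (C * exp (τ • A) * B)))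
      = Matrix.trace (Bᵀ * Q * B) := by
  have hgE : ∀ τ : ℝ, C * exp (τ • A) * B = C * (exp (τ • A) - J) * B := by
    intro τ; rw [Matrix.mul_sub, Matrix.sub_mul, hCJB, sub_zero]
  -- integrability of the entries of the two integrand matrices
  have hPint : ∀ i j, IntegrableOn
      (fun τ : ℝ => ((exp (τ • A) - J) * (B * Bᵀ) * (exp (τ • A) - J)ᵀ) i j)
      (Set.Ioi (0:ℝ)) := by
    intro i j
    have hrw : (fun τ : ℝ => ((exp (τ • A) - J) * (B * Bᵀ) * (exp (τ • A) - J)ᵀ) i j)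
        = fun τ => ∑ l, ∑ k, (B * Bᵀ) k l *
            ((exp (τ • A) - J) i k * (exp (τ • A) - J) j l) := by
      funext τ
      simp only [Matrix.mul_apply, Matrix.transpose_apply, Finset.sum_mul]
      refine Finset.sum_congr rfl fun l _ => Finset.sum_congr rfl fun k _ => ?_
      simp only [Finset.mul_sum, Finset.sum_mul]
      exact Finset.sum_congr rfl fun x _ => by ring
    rw [hrw]
    exact integrable_finset_sum _ fun l _ => integrable_finset_sum _ fun k _ =>
      (E_mul_integrable A J hJ i k j l).const_mul _
  have hQint : ∀ i j, IntegrableOn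
      (fun τ : ℝ => ((exp (τ • A) - J)ᵀ * (Cᵀ * C) * (exp (τ • A) - J)) i j)
      (Set.Ioi (0:ℝ)) := by
    intro i j
    have hrw : (fun τ : ℝ => ((exp (τ • A) - J)ᵀ * (Cᵀ * C) * (exp (τ • A) - J)) i j)
        = fun τ => ∑ l, ∑ k, (Cᵀ * C) k l *
            ((exp (τ • A) - J) k i * (exp (τ • A) - J) l j) := by
      funext τ
      simp only [Matrix.mul_apply, Matrix.transpose_apply, Finset.sum_mul]
      refine Finset.sum_congr rfl fun l _ => Finset.sum_congr rfl fun k _ => ?_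
      simp only [Finset.mul_sum, Finset.sum_mul]
      exact Finset.sum_congr rfl fun x _ => by ring
    rw [hrw]
    exact integrable_finset_sum _ fun l _ => integrable_finset_sum _ fun k _ =>
      (E_mul_integrable A J hJ k i l j).const_mul _
  constructor
  · have hint1 : ∀ τ : ℝ,
        Matrix.trace ((C * exp (τ • A) * B)ᵀ * (C * exp (τ • A) * B))
          = Matrix.trace (C * ((exp (τ • A) - J) * (B * Bᵀ) *
              (exp (τ • A) - J)ᵀ) * Cᵀ) := by
      intro τ
      rw [hgE τ, Matrix.trace_mul_comm]
      simp only [Matrix.transpose_mul, Matrix.mul_assoc]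
    calc (∫ τ in Set.Ioi (0:ℝ),
            Matrix.trace ((C * exp (τ • A) * B)ᵀ * (C * exp (τ • A) * B)))
        = ∫ τ in Set.Ioi (0:ℝ), Matrix.trace (C * ((exp (τ • A) - J) * (B * Bᵀ) *
            (exp (τ • A) - J)ᵀ) * Cᵀ) := by
          exact integral_congr_ae (Filter.Eventually.of_forall fun τ => hint1 τ)
      _ = Matrix.trace (C * P * Cᵀ) := integral_trace_eq C _ P hPint hP
  · have hint2 : ∀ τ : ℝ,
        Matrix.trace ((C * exp (τ • A) * B)ᵀ * (C * exp (τ • A) * B))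
          = Matrix.trace (Bᵀ * ((exp (τ • A) - J)ᵀ * (Cᵀ * C) *
              (exp (τ • A) - J)) * Bᵀᵀ) := by
      intro τ
      rw [hgE τ]
      simp only [Matrix.transpose_mul, Matrix.transpose_transpose, Matrix.mul_assoc]
    calc (∫ τ in Set.Ioi (0:ℝ),
            Matrix.trace ((C * exp (τ • A) * B)ᵀ * (C * exp (τ • A) * B)))
        = ∫ τ in Set.Ioi (0:ℝ), Matrix.trace (Bᵀ * ((exp (τ • A) - J)ᵀ * (Cᵀ * C) *
            (exp (τ • A) - J)) * Bᵀᵀ) := by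
          exact integral_congr_ae (Filter.Eventually.of_forall fun τ => hint2 τ)
      _ = Matrix.trace (Bᵀ * Q * Bᵀᵀ) := integral_trace_eq Bᵀ _ Q hQint hQ
      _ = Matrix.trace (Bᵀ * Q * B) := by rw [Matrix.transpose_transpose]
end

section
/- Let ℒ be a directed-graph Laplacian (ℒ𝟙 = 0, nonnegative diagonal, nonpositive off-diagonal), Π ∈ ℝ^{n×r} a characteristic matrix of a partition (binary with exactly one 1 per row, each column nonzero), and Π† = (ΠᵀNΠ)⁻¹ΠᵀN for a positive diagonal matrix N. Then ℒ̂ := Π†ℒΠ satisfies ℒ̂𝟙_r = 0, has nonnegative diagonal entries, and nonpositive off-diagonal entries; i.e., ℒ̂ is again a Laplacian matrix. -/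
open Matrix

/-- Let `ℒ` be a directed-graph Laplacian (`ℒ𝟙 = 0`, nonnegative diagonal,
nonpositive off-diagonal), `Π` a characteristic matrix of a partition (binary,
exactly one `1` per row, each column nonzero), and `Π† = (ΠᵀNΠ)⁻¹ΠᵀN` for a
positive diagonal `N`. Then `ℒ̂ := Π†ℒΠ` satisfies `ℒ̂𝟙ᵣ = 0`, has nonnegative
diagonal entries, and nonpositive off-diagonal entries: it is again a Laplacian. -/
theorem reduced_laplacian_is_laplacian
    {n r : ℕ} (L : Matrix (Fin n) (Fin n) ℝ)
    (Pi : Matrix (Fin n) (Fin r) ℝ) (d : Fin n → ℝ)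
    (hL1 : L *ᵥ (fun _ => (1:ℝ)) = 0)
    (hLdiag : ∀ i, 0 ≤ L i i)
    (hLoff : ∀ i j, i ≠ j → L i j ≤ 0)
    (hPi01 : ∀ i j, Pi i j = 0 ∨ Pi i j = 1)
    (hPirow : ∀ i, ∑ j, Pi i j = 1)
    (hPicol : ∀ j, ∃ i, Pi i j = 1)
    (hd : ∀ i, 0 < d i)
    (hinv : IsUnit (Piᵀ * Matrix.diagonal d * Pi).det) :
    ((Piᵀ * Matrix.diagonal d * Pi)⁻¹ * (Piᵀ * Matrix.diagonal d) * L * Pi)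
        *ᵥ (fun _ => (1:ℝ)) = 0
    ∧ (∀ i, 0 ≤ ((Piᵀ * Matrix.diagonal d * Pi)⁻¹ * (Piᵀ * Matrix.diagonal d) * L * Pi) i i)
    ∧ (∀ i j, i ≠ j →
        ((Piᵀ * Matrix.diagonal d * Pi)⁻¹ * (Piᵀ * Matrix.diagonal d) * L * Pi) i j ≤ 0) := by
  have hPinn : ∀ i j, 0 ≤ Pi i j := by
    intro i j; rcases hPi01 i j with h|h <;> simp [h]
  -- no two ones in the same row
  have hrow1 : ∀ i k l, k ≠ l → Pi i k * Pi i l = 0 := by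
    intro i k l hkl
    rcases hPi01 i k with h1 | h1
    · simp [h1]
    rcases hPi01 i l with h2 | h2
    · simp [h2]
    exfalso
    have h2le : (2:ℝ) ≤ ∑ j, Pi i j := by
      have hle := Finset.sum_le_sum_of_subset_of_nonneg
        (f := fun j => Pi i j) (Finset.subset_univ ({k, l} : Finset (Fin r)))
        (fun j _ _ => hPinn i j)
      have hpair : ∑ j ∈ ({k, l} : Finset (Fin r)), Pi i j = 2 := by
        rw [Finset.sum_pair hkl, h1, h2]; norm_num
      linarith
    rw [hPirow i] at h2le; linarith
  set m : Fin r → ℝ := fun k => ∑ i, Pi i k * d i with hm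
  have hmpos : ∀ k, 0 < m k := by
    intro k
    obtain ⟨i, hi⟩ := hPicol k
    apply Finset.sum_pos' (fun j _ => mul_nonneg (hPinn j k) (hd j).le)
    exact ⟨i, Finset.mem_univ i, by simp [hi, hd i]⟩
  have hM : Piᵀ * Matrix.diagonal d * Pi = Matrix.diagonal m := by
    ext k l
    have hB : (Piᵀ * Matrix.diagonal d * Pi) k l = ∑ i, Pi i k * d i * Pi i l := by
      rw [Matrix.mul_apply]
      refine Finset.sum_congr rfl fun i _ => ?_
      rw [Matrix.mul_diagonal, Matrix.transpose_apply]
    rw [hB]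
    by_cases hkl : k = l
    · subst hkl
      rw [Matrix.diagonal_apply_eq, hm]
      refine Finset.sum_congr rfl fun i _ => ?_
      rcases hPi01 i k with h|h <;> rw [h] <;> ring
    · rw [Matrix.diagonal_apply_ne _ hkl]
      refine Finset.sum_eq_zero fun i _ => ?_
      have h0 := hrow1 i k l hkl
      calc Pi i k * d i * Pi i l = Pi i k * Pi i l * d i := by ring
        _ = 0 := by rw [h0, zero_mul]
  have hMinv : (Piᵀ * Matrix.diagonal d * Pi)⁻¹ = Matrix.diagonal (fun k => (m k)⁻¹) := by
    rw [hM]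
    apply Matrix.inv_eq_right_inv
    rw [Matrix.diagonal_mul_diagonal, ← Matrix.diagonal_one]
    have he : (fun i => m i * (m i)⁻¹) = fun _ => (1:ℝ) :=
      funext fun k => mul_inv_cancel₀ (hmpos k).ne'
    rw [he]
  -- entry formula
  have hentry : ∀ k l,
      ((Piᵀ * Matrix.diagonal d * Pi)⁻¹ * (Piᵀ * Matrix.diagonal d) * L * Pi) k l
        = ∑ j, ∑ i, (m k)⁻¹ * (Pi i k * d i * L i j * Pi j l) := by
    intro k l
    rw [hMinv, Matrix.mul_apply]
    refine Finset.sum_congr rfl fun j _ => ?_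
    rw [Matrix.mul_apply, Finset.sum_mul]
    refine Finset.sum_congr rfl fun i _ => ?_
    rw [Matrix.diagonal_mul, Matrix.mul_diagonal, Matrix.transpose_apply]
    ring
  have hoff : ∀ k l, k ≠ l →
      ((Piᵀ * Matrix.diagonal d * Pi)⁻¹ * (Piᵀ * Matrix.diagonal d) * L * Pi) k l ≤ 0 := by
    intro k l hkl
    rw [hentry k l]
    refine Finset.sum_nonpos fun j _ => Finset.sum_nonpos fun i _ => ?_
    apply mul_nonpos_of_nonneg_of_nonpos (inv_nonneg.mpr (hmpos k).le)
    rcases hPi01 i k with h1|h1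
    · rw [h1]; ring_nf; simp
    rcases hPi01 j l with h2|h2
    · rw [h2, mul_zero]
    have hij : i ≠ j := by
      rintro rfl
      have h0 := hrow1 i k l hkl
      rw [h1, h2] at h0; norm_num at h0
    rw [h1, h2, one_mul, mul_one]
    exact mul_nonpos_of_nonneg_of_nonpos (hd i).le (hLoff i j hij)
  have hPi1 : Pi *ᵥ (fun _ => (1:ℝ)) = (fun _ => (1:ℝ)) := by
    funext i
    simp [Matrix.mulVec, dotProduct, hPirow i]
  have h1 : ((Piᵀ * Matrix.diagonal d * Pi)⁻¹ * (Piᵀ * Matrix.diagonal d) * L * Pi)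
      *ᵥ (fun _ => (1:ℝ)) = 0 := by
    rw [← Matrix.mulVec_mulVec, hPi1, ← Matrix.mulVec_mulVec, hL1, Matrix.mulVec_zero]
  refine ⟨h1, ?_, hoff⟩
  intro k
  have hsum : ∑ l, ((Piᵀ * Matrix.diagonal d * Pi)⁻¹ * (Piᵀ * Matrix.diagonal d) * L * Pi) k l = 0 := by
    have hk := congrFun h1 k
    simpa [Matrix.mulVec, dotProduct] using hk
  have hsplit := Finset.add_sum_erase Finset.univ
    (fun l => ((Piᵀ * Matrix.diagonal d * Pi)⁻¹ * (Piᵀ * Matrix.diagonal d) * L * Pi) k l)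
    (Finset.mem_univ k)
  have herase : ∑ l ∈ Finset.univ.erase k,
      ((Piᵀ * Matrix.diagonal d * Pi)⁻¹ * (Piᵀ * Matrix.diagonal d) * L * Pi) k l ≤ 0 :=
    Finset.sum_nonpos fun l hl => hoff k l (Ne.symm (Finset.ne_of_mem_erase hl))
  have := hsplit.trans hsum
  linarith
end
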